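/- Let E ∈ K^{m×σ}, M ∈ K^{σ×σ}, s ∈ ℕ^m, and let (δ_1,…,δ_m) be the s-minimal degree of (E,M). Then δ_1 + ⋯ + δ_m equals the rank of the Krylov matrix obtained by stacking E, EM, …, EM^δ (for δ at least the degree of the minimal polynomial of M). -/

import Mathlib

open Polynomial Matrix

/-- Priority comparison on pairs `(c,d)`: lexicographic on `(s_c + d, c)`. -/
def keyLt {m : ℕ} (s : Fin m → ℕ) (x y : Fin m × ℕ) : Prop :=
  s x.1 + x.2 < s y.1 + y.2 ∨ (s x.1 + x.2 = s y.1 + y.2 ∧ x.1 < y.1)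

/-- Row `(c,d)` of the priority-permuted Krylov matrix is a linear combination of the
earlier rows. -/
def DepEarlier {K : Type*} [Field K] {m σ : ℕ} (E : Matrix (Fin m) (Fin σ) K)
    (M : Matrix (Fin σ) (Fin σ) K) (s : Fin m → ℕ) (δ : ℕ) (c : Fin m) (d : ℕ) : Prop :=
  Matrix.vecMul (E c) (M ^ d) ∈
    Submodule.span K
      ((fun y : Fin m × ℕ => Matrix.vecMul (E y.1) (M ^ y.2)) ''
        {y | y.2 ≤ δ ∧ keyLt s y (c, d)})

/-- `dm` is the `s`-minimal degree of `(E,M)`. -/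
def IsMinDeg {K : Type*} [Field K] {m σ : ℕ} (E : Matrix (Fin m) (Fin σ) K)
    (M : Matrix (Fin σ) (Fin σ) K) (s : Fin m → ℕ) (δ : ℕ) (dm : Fin m → ℕ) : Prop :=
  ∀ c, DepEarlier E M s δ c (dm c) ∧ ∀ d, d < dm c → ¬ DepEarlier E M s δ c d

section Aux

variable {K : Type*} [Field K] {m σ : ℕ}

/-- A measure compatible with `keyLt`. -/
def muK (s : Fin m → ℕ) (x : Fin m × ℕ) : ℕ := (s x.1 + x.2) * m + x.1.val

lemma mu_lt_of_key_lt {s : Fin m → ℕ} {x y : Fin m × ℕ}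
    (h : s x.1 + x.2 < s y.1 + y.2) : muK s x < muK s y := by
  unfold muK
  calc (s x.1 + x.2) * m + x.1.val < (s x.1 + x.2) * m + m :=
        Nat.add_lt_add_left x.1.isLt _
    _ = (s x.1 + x.2 + 1) * m := by ring
    _ ≤ (s y.1 + y.2) * m := Nat.mul_le_mul_right _ h
    _ ≤ _ := Nat.le_add_right _ _

lemma mu_lt_of_keyLt {s : Fin m → ℕ} {x y : Fin m × ℕ} (h : keyLt s x y) :
    muK s x < muK s y := by
  rcases h with h | ⟨h1, h2⟩
  · exact mu_lt_of_key_lt h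
  · unfold muK; rw [h1]; exact Nat.add_lt_add_left (Fin.lt_def.mp h2) _

lemma keyLt_of_mu_lt {s : Fin m → ℕ} {x y : Fin m × ℕ} (h : muK s x < muK s y) :
    keyLt s x y := by
  rcases lt_trichotomy (s x.1 + x.2) (s y.1 + y.2) with h1 | h1 | h1
  · exact Or.inl h1
  · refine Or.inr ⟨h1, ?_⟩
    unfold muK at h; rw [h1] at h
    exact Fin.lt_def.mpr (by omega)
  · exact absurd (mu_lt_of_key_lt h1) (by omega)

lemma mu_inj {s : Fin m → ℕ} {x y : Fin m × ℕ} (h : muK s x = muK s y) : x = y := by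
  have hkey : s x.1 + x.2 = s y.1 + y.2 := by
    rcases lt_trichotomy (s x.1 + x.2) (s y.1 + y.2) with h1 | h1 | h1
    · exact absurd (mu_lt_of_key_lt h1) (by omega)
    · exact h1
    · exact absurd (mu_lt_of_key_lt h1) (by omega)
  have h1 : x.1 = y.1 := by
    unfold muK at h; rw [hkey] at h
    exact Fin.ext (by omega)
  have h2 : x.2 = y.2 := by rw [h1] at hkey; omega
  exact Prod.ext h1 h2

variable (E : Matrix (Fin m) (Fin σ) K) (M : Matrix (Fin σ) (Fin σ) K)

/-- `A ↦ u ᵥ* A` as a linear map. -/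
noncomputable def vmr (u : Fin σ → K) : Matrix (Fin σ) (Fin σ) K →ₗ[K] (Fin σ → K) where
  toFun A := Matrix.vecMul u A
  map_add' A B := Matrix.vecMul_add A B u
  map_smul' c A := by
    ext j
    simp [Matrix.vecMul, dotProduct, Finset.mul_sum, mul_left_comm]

lemma depEarlier_top (s : Fin m → ℕ) {δ : ℕ} (hδ : (minpoly K M).natDegree ≤ δ)
    (c : Fin m) : DepEarlier E M s δ c δ := by
  have hint : IsIntegral K M := IsIntegral.of_finite K M
  have hmonic : (minpoly K M).Monic := minpoly.monic hint
  unfold DepEarlier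
  by_cases h0 : (minpoly K M).natDegree = 0
  · -- trivial matrix ring, σ = 0
    have h1 : minpoly K M = 1 := hmonic.natDegree_eq_zero.mp h0
    have h10 : (1 : Matrix (Fin σ) (Fin σ) K) = 0 := by
      have := minpoly.aeval K M
      rw [h1] at this
      simpa using this
    have hempty : IsEmpty (Fin σ) := by
      by_contra h
      rw [not_isEmpty_iff] at h
      obtain ⟨i⟩ := h
      have := congrFun (congrFun h10 i) i
      simp [Matrix.one_apply] at this
    have hz : Matrix.vecMul (E c) (M ^ δ) = 0 := funext fun j => hempty.elim j
    rw [hz]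
    exact Submodule.zero_mem _
  · have hne1 : minpoly K M ≠ 1 := fun h => by simp [h] at h0
    set r := (X : K[X]) ^ δ %ₘ minpoly K M with hr
    have hdeg : r.natDegree < δ :=
      lt_of_lt_of_le (Polynomial.natDegree_modByMonic_lt _ hmonic hne1) hδ
    have hM : M ^ δ = aeval M r := by
      have h := congrArg (aeval M) (Polynomial.modByMonic_add_div ((X : K[X]) ^ δ) (minpoly K M))
      simp only [map_add, _root_.map_mul, map_pow, aeval_X, minpoly.aeval, zero_mul,
        add_zero] at h
      exact h.symm
    have hsum : Matrix.vecMul (E c) (M ^ δ) =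
        ∑ i ∈ Finset.range δ, r.coeff i • Matrix.vecMul (E c) (M ^ i) := by
      have : Matrix.vecMul (E c) (M ^ δ) = vmr (E c) (M ^ δ) := rfl
      rw [this, hM, Polynomial.aeval_eq_sum_range' hdeg, map_sum]
      simp [vmr]
    rw [hsum]
    refine Submodule.sum_smul_mem _ _ fun i hi => Submodule.subset_span ?_
    exact ⟨(c, i), ⟨(Finset.mem_range.mp hi).le,
      Or.inl (Nat.add_lt_add_left (Finset.mem_range.mp hi) _)⟩, rfl⟩

lemma dm_le (s : Fin m → ℕ) {δ : ℕ} (hδ : (minpoly K M).natDegree ≤ δ)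
    {dm : Fin m → ℕ} (hdm : IsMinDeg E M s δ dm) (c : Fin m) : dm c ≤ δ := by
  by_contra h
  push_neg at h
  exact (hdm c).2 δ h (depEarlier_top E M s hδ c)

/-- Every row `E c ⬝ M^d` (any `d`) lies in the span of the basis rows. -/
lemma row_mem_span (s : Fin m → ℕ) {δ : ℕ} {dm : Fin m → ℕ}
    (hdm : IsMinDeg E M s δ dm) (x : Fin m × ℕ) :
    Matrix.vecMul (E x.1) (M ^ x.2) ∈ Submodule.span K
      (Set.range fun i : Σ c : Fin m, Fin (dm c) =>
        Matrix.vecMul (E i.1) (M ^ (i.2 : ℕ))) := by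
  set W := Submodule.span K
      (Set.range fun i : Σ c : Fin m, Fin (dm c) =>
        Matrix.vecMul (E i.1) (M ^ (i.2 : ℕ))) with hW
  suffices H : ∀ n (x : Fin m × ℕ), muK s x < n →
      Matrix.vecMul (E x.1) (M ^ x.2) ∈ W from
    H (muK s x + 1) x (Nat.lt_succ_self _)
  intro n
  induction n with
  | zero => exact fun x hx => absurd hx (Nat.not_lt_zero _)
  | succ n ih =>
    rintro ⟨c, d⟩ hx
    by_cases hd : d < dm c
    · exact Submodule.subset_span ⟨⟨c, ⟨d, hd⟩⟩, rfl⟩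
    · push_neg at hd
      set e := d - dm c with he
      have hde : d = dm c + e := by omega
      have h1 := (hdm c).1
      have h2 := Submodule.apply_mem_span_image_of_mem_span
        (Matrix.vecMulLinear (M ^ e)) h1
      have hL : Matrix.vecMulLinear (M ^ e) (Matrix.vecMul (E c) (M ^ dm c)) =
          Matrix.vecMul (E c) (M ^ d) := by
        rw [Matrix.vecMulLinear_apply, Matrix.vecMul_vecMul, ← pow_add, ← hde]
      rw [hL] at h2
      refine Submodule.span_le.mpr ?_ h2
      rintro _ ⟨_, ⟨y, ⟨hy2, hky⟩, rfl⟩, rfl⟩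
      rw [Matrix.vecMulLinear_apply, Matrix.vecMul_vecMul, ← pow_add]
      have hkey : keyLt s (y.1, y.2 + e) (c, d) := by
        rcases hky with h | ⟨h, h'⟩
        · exact Or.inl (by simp only at h ⊢; omega)
        · exact Or.inr ⟨by simp only at h ⊢; omega, h'⟩
      have hmu : muK s (y.1, y.2 + e) < n := by
        have := mu_lt_of_keyLt hkey
        omega
      exact ih (y.1, y.2 + e) hmu

lemma rows_indep (s : Fin m → ℕ) {δ : ℕ} {dm : Fin m → ℕ}
    (hdm : IsMinDeg E M s δ dm) (hle : ∀ c, dm c ≤ δ) :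
    LinearIndependent K (fun i : Σ c : Fin m, Fin (dm c) =>
      Matrix.vecMul (E i.1) (M ^ (i.2 : ℕ))) := by
  classical
  set w : (Σ c : Fin m, Fin (dm c)) → (Fin σ → K) :=
    fun i => Matrix.vecMul (E i.1) (M ^ (i.2 : ℕ)) with hw
  rw [Fintype.linearIndependent_iff]
  intro g hg
  by_contra hne
  push_neg at hne
  obtain ⟨i0, hi0⟩ := hne
  set S : Finset (Σ c : Fin m, Fin (dm c)) := Finset.univ.filter (fun i => g i ≠ 0) with hS
  have hSne : S.Nonempty := ⟨i0, by simp [hS, hi0]⟩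
  obtain ⟨b, hbS, hmax⟩ := S.exists_max_image (fun i => muK s (i.1, (i.2 : ℕ))) hSne
  have hgb : g b ≠ 0 := (Finset.mem_filter.mp hbS).2
  -- the full sum restricted to S
  have hsumS : ∑ i ∈ S, g i • w i = 0 := by
    rw [Finset.sum_filter_of_ne (fun i _ h => by
      intro hgi; exact h (by rw [hgi, zero_smul]))]
    exact hg
  have hsplit : g b • w b + ∑ i ∈ S.erase b, g i • w i = 0 := by
    rw [Finset.add_sum_erase S (fun i => g i • w i) hbS]; exact hsumS
  have h1 : g b • w b = -∑ i ∈ S.erase b, g i • w i := by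
    rw [eq_neg_iff_add_eq_zero]; exact hsplit
  have hmem : w b ∈ Submodule.span K
      ((fun y : Fin m × ℕ => Matrix.vecMul (E y.1) (M ^ y.2)) ''
        {y | y.2 ≤ δ ∧ keyLt s y (b.1, (b.2 : ℕ))}) := by
    rw [← Submodule.smul_mem_iff _ hgb, h1]
    refine Submodule.neg_mem _ ?_
    refine Submodule.sum_smul_mem _ _ fun i hi => Submodule.subset_span ?_
    have hib : i ≠ b := (Finset.mem_erase.mp hi).1
    have hiS : i ∈ S := (Finset.mem_erase.mp hi).2
    have hlt : muK s (i.1, (i.2 : ℕ)) < muK s (b.1, (b.2 : ℕ)) := by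
      have hle' := hmax i hiS
      rcases lt_or_eq_of_le hle' with h | h
      · exact h
      · exfalso
        have := mu_inj h
        apply hib
        have h1 : i.1 = b.1 := congrArg Prod.fst this
        have h2 : (i.2 : ℕ) = (b.2 : ℕ) := congrArg Prod.snd this
        exact Sigma.ext h1 ((Fin.heq_ext_iff (by rw [h1])).mpr h2)
    exact ⟨(i.1, (i.2 : ℕ)), ⟨(i.2.isLt.le).trans (hle i.1), keyLt_of_mu_lt hlt⟩, rfl⟩
  exact (hdm b.1).2 (b.2 : ℕ) b.2.isLt hmem

end Aux

/-- `δ_1 + ⋯ + δ_m` equals the rank of the Krylov matrix stacking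
`E, EM, …, EM^δ`, for `δ` at least the degree of the minimal polynomial of `M`. -/
theorem sum_minimal_degree_eq_krylov_rank
    {K : Type*} [Field K] {m σ δ : ℕ}
    (M : Matrix (Fin σ) (Fin σ) K) (E : Matrix (Fin m) (Fin σ) K) (s : Fin m → ℕ)
    (hδ : (minpoly K M).natDegree ≤ δ)
    (dm : Fin m → ℕ) (hdm : IsMinDeg E M s δ dm) :
    ∑ c, dm c =
      (Matrix.of fun (x : Fin m × Fin (δ + 1)) (j : Fin σ) =>
        Matrix.vecMul (E x.1) (M ^ (x.2 : ℕ)) j).rank := by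
  classical
  have hle : ∀ c, dm c ≤ δ := dm_le E M s hδ hdm
  set A : Matrix (Fin m × Fin (δ + 1)) (Fin σ) K :=
    Matrix.of fun (x : Fin m × Fin (δ + 1)) (j : Fin σ) =>
      Matrix.vecMul (E x.1) (M ^ (x.2 : ℕ)) j with hA
  set w : (Σ c : Fin m, Fin (dm c)) → (Fin σ → K) :=
    fun i => Matrix.vecMul (E i.1) (M ^ (i.2 : ℕ)) with hw
  rw [Matrix.rank_eq_finrank_span_row]
  have hspan : Submodule.span K (Set.range A) = Submodule.span K (Set.range w) := by
    apply le_antisymm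
    · rw [Submodule.span_le]
      rintro _ ⟨x, rfl⟩
      have : A x = Matrix.vecMul (E x.1) (M ^ ((x.2 : ℕ))) := rfl
      rw [this]
      exact row_mem_span E M s hdm (x.1, (x.2 : ℕ))
    · rw [Submodule.span_le]
      rintro _ ⟨i, rfl⟩
      have hlt : (i.2 : ℕ) < δ + 1 := Nat.lt_succ_of_le (i.2.isLt.le.trans (hle i.1))
      have : w i = A (i.1, ⟨(i.2 : ℕ), hlt⟩) := rfl
      rw [this]
      exact Submodule.subset_span ⟨(i.1, ⟨(i.2 : ℕ), hlt⟩), rfl⟩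
  rw [show Set.range A.row = Set.range A from rfl, hspan, finrank_span_eq_card (rows_indep E M s hdm hle)]
  simp [Fintype.card_sigma]
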